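/- Let a > 0, E_a(z) = (2/sinh(2πa))^{1/2} sin(π(z+ia))/(z+ia), E_a*(z) = conj(E_a(conj z)), and W_a(z) = −e^{−2πa}(a+iz)/(a−iz). Then for all complex z where both sides are defined, (E_a(z) + E_a*(z)W_a(z))/(E_a(z) − E_a*(z)W_a(z)) = coth(2πa) − e^{2πiz} csch(2πa). -/

import Mathlib

open Real Complex

theorem Ea_Wa_quotient_identity (a : ℝ) (ha : 0 < a)
    (Ea Eas Wa : ℂ → ℂ)
    (hEa : ∀ z : ℂ, z + a * Complex.I ≠ 0 →
      Ea z = (Real.sqrt (2 / Real.sinh (2 * π * a)) : ℂ) *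
        Complex.sin (π * (z + a * Complex.I)) / (z + a * Complex.I))
    (hEas : ∀ z : ℂ, Eas z = (starRingEnd ℂ) (Ea ((starRingEnd ℂ) z)))
    (hWa : ∀ z : ℂ, Wa z = -(Real.exp (-(2 * π * a)) : ℂ) * ((a : ℂ) + Complex.I * z)
      / ((a : ℂ) - Complex.I * z)) :
    ∀ z : ℂ, z ≠ -(a : ℂ) * Complex.I → z ≠ (a : ℂ) * Complex.I →
      Ea z - Eas z * Wa z ≠ 0 →
      (Ea z + Eas z * Wa z) / (Ea z - Eas z * Wa z)
        = Complex.cosh (2 * π * a) / Complex.sinh (2 * π * a)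
          - Complex.exp (2 * π * Complex.I * z) * (1 / Complex.sinh (2 * π * a)) := by
  intro z hz1 hz2 hD
  have hzp : z + (a:ℂ) * Complex.I ≠ 0 := fun h => hz1 (by linear_combination h)
  have hzc : (starRingEnd ℂ) z + (a:ℂ) * Complex.I ≠ 0 := by
    intro h
    apply hz2
    have h2 := congrArg (starRingEnd ℂ) h
    simp only [map_add, Complex.conj_conj, map_mul, Complex.conj_ofReal, Complex.conj_I,
      map_zero] at h2
    linear_combination h2
  have hza : z + (a:ℂ) * -Complex.I ≠ 0 := fun h => hz2 (by linear_combination h)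
  set A := Complex.exp ((π:ℂ) * Complex.I * z) with hAdef
  set B := Complex.exp ((π:ℂ) * a) with hBdef
  have hA : A ≠ 0 := Complex.exp_ne_zero _
  have hB : B ≠ 0 := Complex.exp_ne_zero _
  have hI : Complex.I ≠ 0 := Complex.I_ne_zero
  have e1 : Complex.exp (-((π:ℂ) * (z + a * Complex.I)) * Complex.I) = B / A := by
    rw [show -((π:ℂ) * (z + a * Complex.I)) * Complex.I
        = (π:ℂ) * a - (π:ℂ) * Complex.I * z from by
      linear_combination (-(π:ℂ) * a) * Complex.I_sq, Complex.exp_sub]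
  have e2 : Complex.exp (((π:ℂ) * (z + a * Complex.I)) * Complex.I) = A / B := by
    rw [show ((π:ℂ) * (z + a * Complex.I)) * Complex.I
        = (π:ℂ) * Complex.I * z - (π:ℂ) * a from by
      linear_combination ((π:ℂ) * a) * Complex.I_sq, Complex.exp_sub]
  have e3 : Complex.exp (-((π:ℂ) * (z + a * -Complex.I)) * Complex.I) = 1 / (A * B) := by
    rw [show -((π:ℂ) * (z + a * -Complex.I)) * Complex.I
        = -((π:ℂ) * Complex.I * z + (π:ℂ) * a) from by
      linear_combination ((π:ℂ) * a) * Complex.I_sq, Complex.exp_neg, Complex.exp_add]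
    rw [one_div]
  have e4 : Complex.exp (((π:ℂ) * (z + a * -Complex.I)) * Complex.I) = A * B := by
    rw [show ((π:ℂ) * (z + a * -Complex.I)) * Complex.I
        = (π:ℂ) * Complex.I * z + (π:ℂ) * a from by
      linear_combination (-(π:ℂ) * a) * Complex.I_sq, Complex.exp_add]
  have e5 : Complex.exp ((2:ℂ) * π * a) = B * B := by
    rw [show (2:ℂ) * π * a = (π:ℂ) * a + (π:ℂ) * a from by ring, Complex.exp_add]
  have e6 : Complex.exp (-((2:ℂ) * π * a)) = 1 / (B * B) := by
    rw [Complex.exp_neg, e5, one_div]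
  have e7 : Complex.exp ((2:ℂ) * π * Complex.I * z) = A * A := by
    rw [show (2:ℂ) * π * Complex.I * z
        = (π:ℂ) * Complex.I * z + (π:ℂ) * Complex.I * z from by ring, Complex.exp_add]
  have hrexp : ((Real.exp (-(2 * π * a)) : ℝ) : ℂ) = 1 / (B * B) := by
    rw [Complex.ofReal_exp]
    push_cast
    rw [← e6]
  have r1 : (a:ℂ) + Complex.I * z = Complex.I * (z + a * -Complex.I) := by
    linear_combination (a:ℂ) * Complex.I_sq
  have r2 : (a:ℂ) - Complex.I * z = -Complex.I * (z + a * Complex.I) := by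
    linear_combination (a:ℂ) * Complex.I_sq
  set c := ((Real.sqrt (2 / Real.sinh (2 * π * a)) : ℝ) : ℂ) with hc
  have hsinh : (0:ℝ) < Real.sinh (2 * π * a) := Real.sinh_pos_iff.mpr (by positivity)
  have hc0 : c ≠ 0 := by
    rw [hc]
    have : (0:ℝ) < Real.sqrt (2 / Real.sinh (2 * π * a)) :=
      Real.sqrt_pos.mpr (by positivity)
    exact_mod_cast this.ne'
  -- closed forms
  have hWa2 : Wa z = (1 / (B * B)) * (z + a * -Complex.I) / (z + a * Complex.I) := by
    rw [hWa z, hrexp, r1, r2]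
    field_simp
  have hEaz : Ea z = c * ((B / A - A / B) * Complex.I / 2) / (z + a * Complex.I) := by
    rw [hEa z hzp]
    simp only [Complex.sin]
    rw [e1, e2]
  have hEasz : Eas z = c * ((1 / (A * B) - A * B) * Complex.I / 2) / (z + a * -Complex.I) := by
    rw [hEas z, hEa _ hzc]
    simp only [map_div₀, map_mul, Complex.conj_conj, Complex.conj_ofReal, ← Complex.sin_conj,
      map_add, Complex.conj_I]
    simp only [Complex.sin]
    rw [e3, e4, show (starRingEnd ℂ) c = c from by rw [hc]; exact Complex.conj_ofReal _]
  have cancel : ∀ x w u y : ℂ, y ≠ 0 → x / y * (w * y / u) = x * w / u := by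
    intro x w u y hy
    rw [div_mul_div_comm, show x * (w * y) = y * (x * w) from by ring,
      show y * u = y * u from rfl, mul_div_mul_left _ _ hy]
  have hprod : Eas z * Wa z
      = c * ((1 / (A * B) - A * B) * Complex.I / 2) / (B * B) / (z + a * Complex.I) := by
    rw [hEasz, hWa2, cancel _ _ _ _ hza]
    ring
  have hDform : Ea z - Eas z * Wa z
      = c * Complex.I / 2 * ((B / A - A / B) - (1 / (A * B) - A * B) / (B * B))
        / (z + a * Complex.I) := by
    rw [hEaz, hprod]; ring
  have hNform : Ea z + Eas z * Wa z
      = c * Complex.I / 2 * ((B / A - A / B) + (1 / (A * B) - A * B) / (B * B))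
        / (z + a * Complex.I) := by
    rw [hEaz, hprod]; ring
  have hXne : (B / A - A / B) - (1 / (A * B) - A * B) / (B * B) ≠ 0 := by
    intro h
    apply hD
    rw [hDform, h]
    simp
  have hshB : B * B * (B * B) - 1 ≠ 0 := by
    have h4 : Complex.sinh (2 * (π:ℂ) * a) ≠ 0 := by
      rw [show (2 * (π:ℂ) * a) = ((2 * π * a : ℝ) : ℂ) from by push_cast; ring,
        ← Complex.ofReal_sinh]
      exact_mod_cast hsinh.ne'
    rw [Complex.sinh, e5, e6] at h4
    intro h
    apply h4
    field_simp
    linear_combination h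
  have hq : -(B * A) + B ^ 5 * A ≠ 0 := by
    have h2 := mul_ne_zero (mul_ne_zero hB hA) hshB
    intro h; apply h2; linear_combination h
  have hcI : c * Complex.I / 2 ≠ 0 := by
    simp [hc0, Complex.I_ne_zero]
  rw [hNform, hDform, div_div_div_cancel_right₀ hzp,
    mul_div_mul_left _ _ hcI, Complex.sinh, Complex.cosh, e5, e6, e7]
  rw [div_eq_iff hXne]
  have f1 : B ^ 4 - 1 ≠ 0 := by intro h; exact hshB (by linear_combination h)
  have hq2 : -(B ^ 4 * A ^ 2) + B ^ 8 * A ^ 2 ≠ 0 := by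
    have h2 := mul_ne_zero (mul_ne_zero (pow_ne_zero 4 hB) (pow_ne_zero 2 hA)) f1
    intro h; apply h2; linear_combination h
  field_simp [f1, hq2]
  ring
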